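/- arXiv:2505.02578 — 3 statements merged into one kernel-verified Lean document; each statement's English description precedes it below -/
import Mathlib

section
/- Let G be an internally completed weighted graph with external vertices labelled 0,…,N−1 of weighted degrees N₀,…,N_{N−1} and internal vertex set W. Let z₀,…,z_{N−1} ∈ ℝ^D ∖ {0} and x_v ∈ ℝ^D ∖ {0} for v ∈ W be positions such that the two endpoint positions of every edge are distinct. Write ỹ = y/‖y‖² for the inversion of a nonzero point. Then the following pointwise identity of positive reals holds: ∏_{e∈E(G)} p_e evaluated at the inverted positions (x̃_v for internal, z̃_i for external endpoints) equals (∏_{v∈W} ‖x_v‖^{2D}) · (∏_{i=0}^{N−1} ‖z_i‖^{2λN_i}) · ∏_{e∈E(G)} p_e evaluated at the original positions. -/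
noncomputable section

/-- A weighted graph with `N` external vertices (labelled by `Fin N`) and a
finite set `W` of internal vertices.  Edges form a finite type `E`; each edge
joins two distinct vertices and carries a real weight `ν e`. -/
structure FeynGraph (N : ℕ) where
  W : Type
  [fintypeW : Fintype W]
  [decW : DecidableEq W]
  E : Type
  [fintypeE : Fintype E]
  ends : E → (Fin N ⊕ W) × (Fin N ⊕ W)
  ne_ends : ∀ e, (ends e).1 ≠ (ends e).2
  ν : E → ℝ

open MeasureTheory ENNReal

namespace FeynGraph

attribute [instance] fintypeW decW fintypeE

variable {N : ℕ}

/-- Weighted degree of a vertex: the sum of the weights of the incident edges. -/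
def wdeg (G : FeynGraph N) (v : Fin N ⊕ G.W) : ℝ :=
  ∑ e : G.E, ((if (G.ends e).1 = v then G.ν e else 0) +
              (if (G.ends e).2 = v then G.ν e else 0))

/-- `G` is internally completed if every internal vertex has weighted degree `D/λ`. -/
def InternallyCompleted (lam D : ℕ) (G : FeynGraph N) : Prop :=
  ∀ w : G.W, G.wdeg (Sum.inr w) = (D : ℝ) / (lam : ℝ)

end FeynGraph

/-- The position-space propagator `p_e(x,y) = ‖x-y‖^(-2λν_e)`, valued in `[0,∞]`. -/
def prp (lam : ℕ) {D : ℕ} (w : ℝ) (x y : EuclideanSpace ℝ (Fin D)) : ℝ≥0∞ :=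
  (ENNReal.ofReal ‖x - y‖) ^ (-(2 * (lam : ℝ) * w))

/-- The position-space Feynman integral `A_G(z_0,…,z_{N-1})`. -/
def FeynGraph.A (lam D : ℕ) {N : ℕ} (G : FeynGraph N)
    (z : Fin N → EuclideanSpace ℝ (Fin D)) : ℝ≥0∞ :=
  ∫⁻ x : G.W → EuclideanSpace ℝ (Fin D),
    (∏ e : G.E, prp lam (G.ν e) (Sum.elim z x (G.ends e).1) (Sum.elim z x (G.ends e).2)) *
      (ENNReal.ofReal (Real.pi ^ (-(D : ℝ) / 2))) ^ (Fintype.card G.W)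


/-- pointwise inversion identity for the product of propagators of
an internally completed graph. -/
theorem statement8 (lam : ℕ) (hlam : 1 ≤ lam) (D : ℕ) (hD : D = 2 * lam + 2)
    (N : ℕ) (G : FeynGraph N) (hG : G.InternallyCompleted lam D)
    (z : Fin N → EuclideanSpace ℝ (Fin D)) (x : G.W → EuclideanSpace ℝ (Fin D))
    (hz : ∀ i, z i ≠ 0) (hx : ∀ w, x w ≠ 0)
    (hne : ∀ e : G.E,
      Sum.elim z x (G.ends e).1 ≠ Sum.elim z x (G.ends e).2) :
    (∏ e : G.E, prp lam (G.ν e)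
        ((‖Sum.elim z x (G.ends e).1‖ ^ 2)⁻¹ • Sum.elim z x (G.ends e).1)
        ((‖Sum.elim z x (G.ends e).2‖ ^ 2)⁻¹ • Sum.elim z x (G.ends e).2)) =
      (∏ w : G.W, (ENNReal.ofReal ‖x w‖) ^ (2 * (D : ℝ))) *
      (∏ i : Fin N,
        (ENNReal.ofReal ‖z i‖) ^ (2 * (lam : ℝ) * G.wdeg (Sum.inl i))) *
      (∏ e : G.E, prp lam (G.ν e)
        (Sum.elim z x (G.ends e).1) (Sum.elim z x (G.ends e).2)) := by
  classical
  set f : Fin N ⊕ G.W → EuclideanSpace ℝ (Fin D) := Sum.elim z x with hfdef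
  have hf : ∀ v, f v ≠ 0 := by rintro (i | w); exacts [hz i, hx w]
  have hfpos : ∀ v, (0 : ℝ) < ‖f v‖ := fun v => norm_pos_iff.2 (hf v)
  set s : G.E → ℝ := fun e => 2 * (lam : ℝ) * G.ν e with hs
  have hdpos : ∀ e : G.E, (0 : ℝ) < ‖f (G.ends e).1 - f (G.ends e).2‖ := fun e =>
    norm_pos_iff.2 (sub_ne_zero.2 (hne e))
  -- norm of difference of inverted points
  have hinv : ∀ e : G.E,
      ‖(‖f (G.ends e).1‖ ^ 2)⁻¹ • f (G.ends e).1 - (‖f (G.ends e).2‖ ^ 2)⁻¹ • f (G.ends e).2‖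
        = ‖f (G.ends e).1 - f (G.ends e).2‖ / (‖f (G.ends e).1‖ * ‖f (G.ends e).2‖) := by
    intro e
    have h := dist_div_norm_sq_smul (hf (G.ends e).1) (hf (G.ends e).2) 1
    simp only [dist_eq_norm, div_pow, one_pow, one_div, inv_pow] at h
    rw [h]; ring
  have hinvpos : ∀ e : G.E, (0 : ℝ) <
      ‖(‖f (G.ends e).1‖ ^ 2)⁻¹ • f (G.ends e).1 - (‖f (G.ends e).2‖ ^ 2)⁻¹ • f (G.ends e).2‖ := by
    intro e
    rw [hinv e]
    exact div_pos (hdpos e) (mul_pos (hfpos _) (hfpos _))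
  -- combinatorial identity over the vertices
  have hcomb : ∏ e : G.E, (‖f (G.ends e).1‖ * ‖f (G.ends e).2‖) ^ s e
      = ∏ v : Fin N ⊕ G.W, ‖f v‖ ^ (2 * (lam : ℝ) * G.wdeg v) := by
    have step1 : ∀ e : G.E, (‖f (G.ends e).1‖ * ‖f (G.ends e).2‖) ^ s e
        = ∏ v : Fin N ⊕ G.W, ‖f v‖ ^
            ((if (G.ends e).1 = v then s e else 0) + (if (G.ends e).2 = v then s e else 0)) := by
      intro e
      have : ∀ v : Fin N ⊕ G.W, ‖f v‖ ^
            ((if (G.ends e).1 = v then s e else 0) + (if (G.ends e).2 = v then s e else 0))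
          = (if (G.ends e).1 = v then ‖f v‖ ^ s e else 1) *
            (if (G.ends e).2 = v then ‖f v‖ ^ s e else 1) := by
        intro v
        rw [Real.rpow_add (hfpos v)]
        congr 1 <;> split <;> simp
      simp only [this, Finset.prod_mul_distrib, Finset.prod_ite_eq, Finset.mem_univ, if_true]
      rw [Real.mul_rpow (norm_nonneg _) (norm_nonneg _)]
    simp only [step1]
    rw [Finset.prod_comm]
    refine Finset.prod_congr rfl fun v _ => ?_
    rw [← Real.rpow_sum_of_pos (hfpos v)]
    congr 1
    rw [FeynGraph.wdeg, Finset.mul_sum]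
    refine Finset.sum_congr rfl fun e _ => ?_
    simp only [hs, mul_add, mul_ite, mul_zero]
  -- split the vertex product
  have hsplit : ∏ v : Fin N ⊕ G.W, ‖f v‖ ^ (2 * (lam : ℝ) * G.wdeg v)
      = (∏ w : G.W, ‖x w‖ ^ (2 * (D : ℝ))) *
        (∏ i : Fin N, ‖z i‖ ^ (2 * (lam : ℝ) * G.wdeg (Sum.inl i))) := by
    rw [Fintype.prod_sum_type, mul_comm]
    congr 1
    refine Finset.prod_congr rfl fun w _ => ?_
    have hlam' : (lam : ℝ) ≠ 0 := Nat.cast_ne_zero.2 (by omega)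
    rw [hG w]
    congr 1
    field_simp
  -- per-edge identity on the reals
  have hedge : ∀ e : G.E,
      ‖(‖f (G.ends e).1‖ ^ 2)⁻¹ • f (G.ends e).1 - (‖f (G.ends e).2‖ ^ 2)⁻¹ • f (G.ends e).2‖
          ^ (-(s e))
        = (‖f (G.ends e).1‖ * ‖f (G.ends e).2‖) ^ s e *
          ‖f (G.ends e).1 - f (G.ends e).2‖ ^ (-(s e)) := by
    intro e
    rw [hinv e, Real.div_rpow (norm_nonneg _) (le_of_lt (mul_pos (hfpos _) (hfpos _))),
      Real.rpow_neg (le_of_lt (mul_pos (hfpos _) (hfpos _))), div_eq_mul_inv, inv_inv, mul_comm]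
  -- convert everything through ofReal
  have hprpL : ∀ e : G.E, prp lam (G.ν e)
        ((‖f (G.ends e).1‖ ^ 2)⁻¹ • f (G.ends e).1) ((‖f (G.ends e).2‖ ^ 2)⁻¹ • f (G.ends e).2)
      = ENNReal.ofReal
          (‖(‖f (G.ends e).1‖ ^ 2)⁻¹ • f (G.ends e).1 -
              (‖f (G.ends e).2‖ ^ 2)⁻¹ • f (G.ends e).2‖ ^ (-(s e))) := by
    intro e
    rw [prp, ENNReal.ofReal_rpow_of_pos (hinvpos e)]
  have hprpR : ∀ e : G.E, prp lam (G.ν e) (f (G.ends e).1) (f (G.ends e).2)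
      = ENNReal.ofReal (‖f (G.ends e).1 - f (G.ends e).2‖ ^ (-(s e))) := by
    intro e
    rw [prp, ENNReal.ofReal_rpow_of_pos (hdpos e)]
  calc (∏ e : G.E, prp lam (G.ν e)
        ((‖f (G.ends e).1‖ ^ 2)⁻¹ • f (G.ends e).1) ((‖f (G.ends e).2‖ ^ 2)⁻¹ • f (G.ends e).2))
      = ENNReal.ofReal (∏ e : G.E,
          ‖(‖f (G.ends e).1‖ ^ 2)⁻¹ • f (G.ends e).1 -
              (‖f (G.ends e).2‖ ^ 2)⁻¹ • f (G.ends e).2‖ ^ (-(s e))) := by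
        rw [ENNReal.ofReal_prod_of_nonneg fun e _ => Real.rpow_nonneg (norm_nonneg _) _]
        exact Finset.prod_congr rfl fun e _ => hprpL e
    _ = ENNReal.ofReal ((∏ w : G.W, ‖x w‖ ^ (2 * (D : ℝ))) *
          (∏ i : Fin N, ‖z i‖ ^ (2 * (lam : ℝ) * G.wdeg (Sum.inl i))) *
          ∏ e : G.E, ‖f (G.ends e).1 - f (G.ends e).2‖ ^ (-(s e))) := by
        congr 1
        calc (∏ e : G.E,
            ‖(‖f (G.ends e).1‖ ^ 2)⁻¹ • f (G.ends e).1 -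
                (‖f (G.ends e).2‖ ^ 2)⁻¹ • f (G.ends e).2‖ ^ (-(s e)))
            = (∏ e : G.E, (‖f (G.ends e).1‖ * ‖f (G.ends e).2‖) ^ s e) *
              ∏ e : G.E, ‖f (G.ends e).1 - f (G.ends e).2‖ ^ (-(s e)) := by
              rw [← Finset.prod_mul_distrib]
              exact Finset.prod_congr rfl fun e _ => hedge e
          _ = _ := by rw [hcomb, hsplit]
    _ = (∏ w : G.W, (ENNReal.ofReal ‖x w‖) ^ (2 * (D : ℝ))) *
        (∏ i : Fin N, (ENNReal.ofReal ‖z i‖) ^ (2 * (lam : ℝ) * G.wdeg (Sum.inl i))) *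
        (∏ e : G.E, prp lam (G.ν e) (f (G.ends e).1) (f (G.ends e).2)) := by
        rw [ENNReal.ofReal_mul (by positivity), ENNReal.ofReal_mul (by positivity)]
        congr 1
        · congr 1
          · rw [ENNReal.ofReal_prod_of_nonneg fun w _ => Real.rpow_nonneg (norm_nonneg _) _]
            exact Finset.prod_congr rfl fun w _ =>
              (ENNReal.ofReal_rpow_of_pos (norm_pos_iff.2 (hx w))).symm
          · rw [ENNReal.ofReal_prod_of_nonneg fun i _ => Real.rpow_nonneg (norm_nonneg _) _]
            exact Finset.prod_congr rfl fun i _ =>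
              (ENNReal.ofReal_rpow_of_pos (norm_pos_iff.2 (hz i))).symm
        · rw [ENNReal.ofReal_prod_of_nonneg fun e _ => Real.rpow_nonneg (norm_nonneg _) _]
          exact Finset.prod_congr rfl fun e _ => (hprpR e).symm
end
end

section
/- Let D ≥ 1 be an integer. For every measurable function f : ℝ^D → [0,∞], the change of variables under the inversion x ↦ x/‖x‖² holds: ∫_{ℝ^D} f(x/‖x‖²) · ‖x‖^{−2D} dx = ∫_{ℝ^D} f(x) dx, where the integrand on the left is interpreted as 0 at x = 0 and both integrals are Lebesgue integrals of nonnegative functions valued in [0,∞]. -/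
open MeasureTheory ENNReal

open scoped Classical

open EuclideanGeometry Module

/-- change of variables for the inversion `x ↦ x/‖x‖²` of `ℝ^D`,
whose Jacobian determinant has absolute value `‖x‖^(-2D)`:  for every
measurable `f : ℝ^D → [0,∞]`,
`∫ f(x/‖x‖²)·‖x‖^(-2D) dx = ∫ f(x) dx` (the integrand on the left being
interpreted as `0` at `x = 0`). -/
theorem statement9 (D : ℕ) (hD : 1 ≤ D)
    (f : EuclideanSpace ℝ (Fin D) → ℝ≥0∞) (hf : Measurable f) :
    (∫⁻ x : EuclideanSpace ℝ (Fin D),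
        if x = 0 then 0
        else f ((‖x‖ ^ 2)⁻¹ • x) * (ENNReal.ofReal ‖x‖) ^ (-(2 * (D : ℝ)))) =
      ∫⁻ x : EuclideanSpace ℝ (Fin D), f x := by
  let E := EuclideanSpace ℝ (Fin D)
  have hnt : Nontrivial (EuclideanSpace ℝ (Fin D)) := by
    apply Module.nontrivial_of_finrank_pos (R := ℝ)
    rw [finrank_euclideanSpace_fin]; omega
  set s : Set E := {0}ᶜ with hs_def
  have hs : MeasurableSet s := (measurableSet_singleton 0).compl
  set g : E → E := inversion (0 : E) 1 with hg_def
  have hginv : Function.Involutive g := inversion_involutive (0 : E) one_ne_zero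
  have hg0 : g 0 = 0 := by simp [hg_def, inversion_def]
  have hgeq : ∀ x : E, x ≠ 0 → g x = (‖x‖ ^ 2)⁻¹ • x := by
    intro x hx
    simp [hg_def, inversion_def, dist_zero_right, one_div, inv_pow]
  have hgs : g '' s = s := by
    apply Set.Subset.antisymm
    · rintro _ ⟨x, hx, rfl⟩
      intro h
      simp only [Set.mem_singleton_iff] at h
      apply hx
      have := hginv x
      rw [h, hg0] at this
      simp [← this]
    · intro x hx
      exact ⟨g x, by
        intro h
        simp only [Set.mem_singleton_iff] at h
        apply hx
        have := hginv x
        rw [h, hg0] at this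
        simp [← this], hginv x⟩
  set f' : E → E →L[ℝ] E := fun x =>
    ((1 / dist x (0 : E)) ^ 2) • ((ℝ ∙ (x - 0))ᗮ.reflection : E →L[ℝ] E) with hf'_def
  have hderiv : ∀ x ∈ s, HasFDerivWithinAt g (f' x) s x := fun x hx =>
    (hasFDerivAt_inversion (c := (0 : E)) (R := 1) hx).hasFDerivWithinAt
  have hinj : Set.InjOn g s := (hginv.injective).injOn
  have key := lintegral_image_eq_lintegral_abs_det_fderiv_mul volume hs hderiv hinj f
  rw [hgs] at key
  have hdet : ∀ x : E, x ≠ 0 →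
      ENNReal.ofReal |(f' x).det| = (ENNReal.ofReal ‖x‖) ^ (-(2 * (D : ℝ))) := by
    intro x hx
    have hxn : (0:ℝ) < ‖x‖ := norm_pos_iff.2 hx
    have hdet1 : (f' x).det = ((1 / ‖x‖) ^ 2) ^ D * (-1) := by
      rw [hf'_def]
      simp only [dist_zero_right, sub_zero]
      rw [ContinuousLinearMap.det]
      rw [ContinuousLinearMap.coe_smul, LinearMap.det_smul]
      congr 1
      · rw [finrank_euclideanSpace_fin]
      · have h := Submodule.det_reflection (K := (ℝ ∙ x)ᗮ)
        rw [Submodule.orthogonal_orthogonal, finrank_span_singleton hx, pow_one] at h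
        exact h
    rw [hdet1]
    have h2 : |((1 / ‖x‖) ^ 2) ^ D * (-1)| = ((‖x‖ ^ 2)⁻¹) ^ D := by
      rw [abs_mul, abs_neg, abs_one, mul_one, abs_pow, abs_pow, abs_of_pos (by positivity)]
      rw [one_div, inv_pow]
    rw [h2]
    rw [ENNReal.ofReal_rpow_of_pos hxn]
    congr 1
    rw [Real.rpow_neg hxn.le]
    rw [show (2 * (D:ℝ)) = ((2 * D : ℕ) : ℝ) by push_cast; ring, Real.rpow_natCast]
    rw [pow_mul, ← inv_pow, ← inv_pow, inv_pow]
  -- rewrite left side of statement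
  have lhs_eq : (∫⁻ x : E,
        if x = 0 then 0
        else f ((‖x‖ ^ 2)⁻¹ • x) * (ENNReal.ofReal ‖x‖) ^ (-(2 * (D : ℝ))))
      = ∫⁻ x in s, ENNReal.ofReal |(f' x).det| * f (g x) := by
    rw [← lintegral_indicator hs]
    apply lintegral_congr
    intro x
    by_cases hx : x = 0
    · simp [hx, hs_def]
    · rw [Set.indicator_of_mem (by simpa [hs_def] using hx)]
      rw [if_neg hx, hdet x hx, hgeq x hx, mul_comm]
  rw [lhs_eq, ← key]
  have : s =ᵐ[volume] (Set.univ : Set E) := by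
    rw [hs_def]
    have : (volume : Measure E) {(0:E)} = 0 := measure_singleton _
    rw [Filter.eventuallyEq_set]
    filter_upwards [measure_eq_zero_iff_ae_notMem.mp this] with a ha
    simp [ha]
  rw [Measure.restrict_congr_set this, Measure.restrict_univ]
end

section
/- Let H be a weighted graph with three external vertices labelled 0,1,2, internal vertex set W, and set N_H = (Σ_{e∈E(H)} ν_e) − (D/(2λ))·|W|. Let (z₀,z₁,z₂) and (w₀,w₁,w₂) be two triples of pairwise distinct points of ℝ^D satisfying ‖z₂−z₀‖/‖z₁−z₀‖ = ‖w₂−w₀‖/‖w₁−w₀‖ and ‖z₂−z₁‖/‖z₁−z₀‖ = ‖w₂−w₁‖/‖w₁−w₀‖. Then ‖z₁−z₀‖^{2λN_H} · A_H(z₀,z₁,z₂) = ‖w₁−w₀‖^{2λN_H} · A_H(w₀,w₁,w₂) as an identity in [0,∞]; i.e. the normalized three-point Feynman integral depends only on the two distance ratios. -/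
noncomputable section

open MeasureTheory ENNReal

section Aux

open Module

private lemma exists_isometry_two {V : Type*} [NormedAddCommGroup V] [InnerProductSpace ℝ V]
    [FiniteDimensional ℝ V] (u1 u2 v1 v2 : V)
    (h1 : ‖v1‖ = ‖u1‖) (h2 : ‖v2‖ = ‖u2‖) (h3 : ‖v2 - v1‖ = ‖u2 - u1‖) :
    ∃ A : V ≃ₗᵢ[ℝ] V, A u1 = v1 ∧ A u2 = v2 := by
  have hinner : (inner ℝ v1 v2 : ℝ) = inner ℝ u1 u2 := by
    have e1 := norm_sub_sq_real u2 u1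
    have e2 := norm_sub_sq_real v2 v1
    rw [h1, h2, h3] at e2
    have c1 := real_inner_comm v1 v2
    have c2 := real_inner_comm u1 u2
    linarith
  have expand : ∀ (a b : ℝ) (x y : V),
      ‖a • x + b • y‖ ^ 2 = a^2 * ‖x‖^2 + 2*(a*b)*(inner ℝ x y : ℝ) + b^2 * ‖y‖^2 := by
    intro a b x y
    rw [← real_inner_self_eq_norm_sq, real_inner_add_add_self]
    simp only [real_inner_smul_left, real_inner_smul_right, real_inner_self_eq_norm_sq,
      norm_smul, Real.norm_eq_abs, mul_pow, sq_abs]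
    ring
  have key : ∀ a b : ℝ, ‖a • v1 + b • v2‖ = ‖a • u1 + b • u2‖ := by
    intro a b
    rw [← sq_eq_sq₀ (norm_nonneg _) (norm_nonneg _), expand, expand, h1, h2, hinner]
  -- linear maps
  set ψ : (ℝ × ℝ) →ₗ[ℝ] V :=
    (LinearMap.fst ℝ ℝ ℝ).smulRight u1 + (LinearMap.snd ℝ ℝ ℝ).smulRight u2 with hψdef
  set φ : (ℝ × ℝ) →ₗ[ℝ] V :=
    (LinearMap.fst ℝ ℝ ℝ).smulRight v1 + (LinearMap.snd ℝ ℝ ℝ).smulRight v2 with hφdef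
  have hψ : ∀ p : ℝ × ℝ, ψ p = p.1 • u1 + p.2 • u2 := fun p => rfl
  have hφ : ∀ p : ℝ × ℝ, φ p = p.1 • v1 + p.2 • v2 := fun p => rfl
  have hnorm : ∀ p : ℝ × ℝ, ‖φ p‖ = ‖ψ p‖ := by
    intro p; rw [hψ, hφ]; exact key p.1 p.2
  have hker : LinearMap.ker ψ ≤ LinearMap.ker φ := by
    intro p hp
    rw [LinearMap.mem_ker] at hp ⊢
    have := hnorm p
    rw [hp, norm_zero] at this
    exact norm_eq_zero.mp this
  set L : (LinearMap.range ψ) →ₗ[ℝ] V :=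
    (Submodule.liftQ (LinearMap.ker ψ) φ hker).comp
      (LinearMap.quotKerEquivRange ψ).symm.toLinearMap with hLdef
  have hL : ∀ p : ℝ × ℝ, L ⟨ψ p, LinearMap.mem_range_self ψ p⟩ = φ p := by
    intro p
    have h := LinearMap.quotKerEquivRange_symm_apply_image (f := ψ) p
      (LinearMap.mem_range_self ψ p)
    rw [hLdef, LinearMap.comp_apply, LinearEquiv.coe_toLinearMap, h, Submodule.mkQ_apply,
      Submodule.liftQ_apply]
  have hLnorm : ∀ s : LinearMap.range ψ, ‖L s‖ = ‖s‖ := by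
    rintro ⟨y, p, rfl⟩
    rw [hL p]
    have : ‖(⟨ψ p, LinearMap.mem_range_self ψ p⟩ : LinearMap.range ψ)‖ = ‖ψ p‖ := rfl
    rw [this]
    exact hnorm p
  set Li : (LinearMap.range ψ) →ₗᵢ[ℝ] V := ⟨L, hLnorm⟩ with hLi
  have hA' : ∀ p : ℝ × ℝ, Li.extend (ψ p) = φ p := by
    intro p
    have h := Li.extend_apply ⟨ψ p, LinearMap.mem_range_self ψ p⟩
    rw [h]
    exact hL p
  refine ⟨Li.extend.toLinearIsometryEquiv rfl, ?_, ?_⟩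
  · have h := hA' (1, 0)
    simp only [hψ, hφ, one_smul, zero_smul, add_zero] at h
    simpa [LinearIsometry.coe_toLinearIsometryEquiv] using h
  · have h := hA' (0, 1)
    simp only [hψ, hφ, one_smul, zero_smul, zero_add] at h
    simpa [LinearIsometry.coe_toLinearIsometryEquiv] using h

private lemma prod_rpow_sum_aux {ι : Type*} (s : Finset ι) (a : ℝ≥0∞) (ha : a ≠ 0) (ha' : a ≠ ⊤)
    (r : ι → ℝ) : (∏ i ∈ s, a ^ r i) = a ^ (∑ i ∈ s, r i) := by
  classical
  induction s using Finset.induction_on with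
  | empty => simp
  | insert _ _ h ih => rw [Finset.prod_insert h, Finset.sum_insert h, ENNReal.rpow_add _ _ ha ha', ih]

private lemma lintegral_comp_similarity (D : ℕ) {W : Type} [Fintype W]
    (A : EuclideanSpace ℝ (Fin D) ≃ₗᵢ[ℝ] EuclideanSpace ℝ (Fin D)) {c : ℝ} (hc : 0 < c)
    (t s : EuclideanSpace ℝ (Fin D)) (F : (W → EuclideanSpace ℝ (Fin D)) → ℝ≥0∞) :
    ∫⁻ y : W → EuclideanSpace ℝ (Fin D), F (fun v => s + c • A (y v - t)) =
      (ENNReal.ofReal c) ^ (-((D : ℝ) * (Fintype.card W))) * ∫⁻ x, F x := by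
  classical
  haveI : Measure.IsAddHaarMeasure (volume : Measure (W → EuclideanSpace ℝ (Fin D))) :=
    Measure.pi.isAddHaarMeasure (fun _ : W => (volume : Measure (EuclideanSpace ℝ (Fin D))))
  set P1 : (W → EuclideanSpace ℝ (Fin D)) ≃ᵐ (W → EuclideanSpace ℝ (Fin D)) :=
    MeasurableEquiv.piCongrRight (fun _ : W => (Homeomorph.addRight (-t)).toMeasurableEquiv)
    with hP1def
  set P3 : (W → EuclideanSpace ℝ (Fin D)) ≃ᵐ (W → EuclideanSpace ℝ (Fin D)) :=
    MeasurableEquiv.piCongrRight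
      (fun _ : W => (A.toHomeomorph.trans (Homeomorph.addLeft s)).toMeasurableEquiv) with hP3def
  set PS : (W → EuclideanSpace ℝ (Fin D)) ≃ᵐ (W → EuclideanSpace ℝ (Fin D)) :=
    (Homeomorph.smulOfNeZero c hc.ne' :
      (W → EuclideanSpace ℝ (Fin D)) ≃ₜ (W → EuclideanSpace ℝ (Fin D))).toMeasurableEquiv
    with hPSdef
  have hP1 : MeasurePreserving (⇑P1)
      (volume : Measure (W → EuclideanSpace ℝ (Fin D))) volume := by
    exact volume_preserving_pi
      (fun _ : W => measurePreserving_add_right (volume : Measure (EuclideanSpace ℝ (Fin D))) (-t))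
  have hP3 : MeasurePreserving (⇑P3)
      (volume : Measure (W → EuclideanSpace ℝ (Fin D))) volume := by
    exact volume_preserving_pi
      (fun _ : W => (measurePreserving_add_left (volume : Measure (EuclideanSpace ℝ (Fin D))) s).comp
        A.measurePreserving)
  have hPS : Measure.map (⇑PS) (volume : Measure (W → EuclideanSpace ℝ (Fin D))) =
      (ENNReal.ofReal c) ^ (-((D : ℝ) * (Fintype.card W))) • volume := by
    have h := Measure.map_addHaar_smul (volume : Measure (W → EuclideanSpace ℝ (Fin D))) hc.ne'
    have hfr : finrank ℝ (W → EuclideanSpace ℝ (Fin D)) = Fintype.card W * D := by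
      rw [finrank_pi_fintype]
      simp only [finrank_euclideanSpace_fin, Finset.sum_const, smul_eq_mul, Finset.card_univ]
    rw [show (⇑PS) = (fun x : W → EuclideanSpace ℝ (Fin D) => c • x) from rfl, h, hfr]
    congr 1
    rw [abs_of_pos (by positivity)]
    rw [← Real.rpow_natCast c (Fintype.card W * D), ← Real.rpow_neg hc.le,
      ← ENNReal.ofReal_rpow_of_pos hc]
    congr 1
    push_cast
    ring
  have hsub : ∀ y : W → EuclideanSpace ℝ (Fin D),
      (⇑P3) ((⇑PS) ((⇑P1) y)) = fun v => s + c • A (y v - t) := by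
    intro y
    funext v
    show s + A (c • (y v + -t)) = s + c • A (y v - t)
    rw [A.map_smul, sub_eq_add_neg]
  calc ∫⁻ y : W → EuclideanSpace ℝ (Fin D), F (fun v => s + c • A (y v - t))
      = ∫⁻ y, F (P3 (PS (P1 y))) := by simp_rw [hsub]
    _ = ∫⁻ y, F (P3 (PS y)) ∂(Measure.map (⇑P1) volume) :=
        (lintegral_map_equiv (fun y => F (P3 (PS y))) P1).symm
    _ = ∫⁻ y, F (P3 (PS y)) := by rw [hP1.map_eq]
    _ = ∫⁻ y, F (P3 y) ∂(Measure.map (⇑PS) volume) :=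
        (lintegral_map_equiv (fun y => F (P3 y)) PS).symm
    _ = (ENNReal.ofReal c) ^ (-((D : ℝ) * (Fintype.card W))) * ∫⁻ y, F (P3 y) := by
        rw [hPS, lintegral_smul_measure, smul_eq_mul]
    _ = (ENNReal.ofReal c) ^ (-((D : ℝ) * (Fintype.card W))) *
          ∫⁻ x, F x ∂(Measure.map (⇑P3) volume) := by
        rw [lintegral_map_equiv F P3]
    _ = (ENNReal.ofReal c) ^ (-((D : ℝ) * (Fintype.card W))) * ∫⁻ x, F x := by
        rw [hP3.map_eq]

private lemma A_similarity (lam D : ℕ) {N : ℕ} (H : FeynGraph N)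
    (A : EuclideanSpace ℝ (Fin D) ≃ₗᵢ[ℝ] EuclideanSpace ℝ (Fin D))
    {c : ℝ} (hc : 0 < c) (t s : EuclideanSpace ℝ (Fin D))
    (z : Fin N → EuclideanSpace ℝ (Fin D)) :
    H.A lam D (fun i => s + c • A (z i - t)) =
      (ENNReal.ofReal c) ^ ((D : ℝ) * (Fintype.card H.W) - 2 * (lam : ℝ) * ∑ e : H.E, H.ν e) *
        H.A lam D z := by
  classical
  set q : ℝ≥0∞ := ENNReal.ofReal c with hq
  have hq0 : q ≠ 0 := (ENNReal.ofReal_pos.mpr hc).ne'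
  have hqt : q ≠ ⊤ := ENNReal.ofReal_ne_top
  have hqrt : ∀ r : ℝ, q ^ r ≠ ⊤ := by
    intro r
    rw [hq, ENNReal.ofReal_rpow_of_pos hc]
    exact ENNReal.ofReal_ne_top
  set K : ℝ≥0∞ := (ENNReal.ofReal (Real.pi ^ (-(D : ℝ) / 2))) ^ (Fintype.card H.W) with hK
  set Fw : (H.W → EuclideanSpace ℝ (Fin D)) → ℝ≥0∞ := fun x =>
    (∏ e : H.E, prp lam (H.ν e)
      (Sum.elim (fun i => s + c • A (z i - t)) x (H.ends e).1)
      (Sum.elim (fun i => s + c • A (z i - t)) x (H.ends e).2)) * K with hFw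
  set F0 : (H.W → EuclideanSpace ℝ (Fin D)) → ℝ≥0∞ := fun x =>
    (∏ e : H.E, prp lam (H.ν e) (Sum.elim z x (H.ends e).1) (Sum.elim z x (H.ends e).2)) * K
    with hF0
  have hAw : H.A lam D (fun i => s + c • A (z i - t)) = ∫⁻ x, Fw x := rfl
  have hAz : H.A lam D z = ∫⁻ x, F0 x := rfl
  -- pointwise identity
  have hgsub : ∀ a b : EuclideanSpace ℝ (Fin D),
      (s + c • A (a - t)) - (s + c • A (b - t)) = c • A (a - b) := by
    intro a b
    rw [add_sub_add_left_eq_sub, ← smul_sub, ← A.map_sub]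
    congr 2
    abel
  have hgnorm : ∀ a b : EuclideanSpace ℝ (Fin D),
      ‖(s + c • A (a - t)) - (s + c • A (b - t))‖ = c * ‖a - b‖ := by
    intro a b
    rw [hgsub, norm_smul, A.norm_map, Real.norm_eq_abs, abs_of_pos hc]
  have hprp : ∀ (wt : ℝ) (a b : EuclideanSpace ℝ (Fin D)),
      prp lam wt (s + c • A (a - t)) (s + c • A (b - t)) =
        q ^ (-(2 * (lam : ℝ) * wt)) * prp lam wt a b := by
    intro wt a b
    simp only [prp]
    rw [hgnorm, ENNReal.ofReal_mul hc.le,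
      ENNReal.mul_rpow_of_ne_top ENNReal.ofReal_ne_top ENNReal.ofReal_ne_top]
  have helim : ∀ (y : H.W → EuclideanSpace ℝ (Fin D)) (sv : Fin N ⊕ H.W),
      Sum.elim (fun i => s + c • A (z i - t)) (fun v => s + c • A (y v - t)) sv =
        s + c • A ((Sum.elim z y sv) - t) := by
    rintro y (i | v) <;> rfl
  have hFull : ∀ y : H.W → EuclideanSpace ℝ (Fin D),
      Fw (fun v => s + c • A (y v - t)) =
        q ^ (-(2 * (lam : ℝ) * ∑ e : H.E, H.ν e)) * F0 y := by
    intro y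
    rw [hFw, hF0]
    simp only [helim, hprp]
    rw [Finset.prod_mul_distrib, prod_rpow_sum_aux _ _ hq0 hqt, mul_assoc]
    congr 2
    simp [Finset.sum_neg_distrib, Finset.mul_sum]
  -- integrate
  have hmain := lintegral_comp_similarity D A hc t s Fw
  have h2 : (∫⁻ y : H.W → EuclideanSpace ℝ (Fin D), Fw (fun v => s + c • A (y v - t))) =
      q ^ (-(2 * (lam : ℝ) * ∑ e : H.E, H.ν e)) * ∫⁻ y, F0 y := by
    simp_rw [hFull]; exact lintegral_const_mul' _ _ (hqrt _)
  replace hmain := h2.symm.trans hmain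
  have hcancel : ∀ (u : ℝ) (X : ℝ≥0∞), q ^ u * (q ^ (-u) * X) = X := by
    intro u X
    rw [← mul_assoc, ← ENNReal.rpow_add _ _ hq0 hqt]
    simp
  rw [hAw, hAz]
  calc (∫⁻ x, Fw x)
      = q ^ ((D : ℝ) * (Fintype.card H.W)) *
          (q ^ (-((D : ℝ) * (Fintype.card H.W))) * ∫⁻ x, Fw x) := (hcancel _ _).symm
    _ = q ^ ((D : ℝ) * (Fintype.card H.W)) *
          (q ^ (-(2 * (lam : ℝ) * ∑ e : H.E, H.ν e)) * ∫⁻ x, F0 x) := by rw [← hmain]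
    _ = (q ^ ((D : ℝ) * (Fintype.card H.W)) * q ^ (-(2 * (lam : ℝ) * ∑ e : H.E, H.ν e))) *
          ∫⁻ x, F0 x := (mul_assoc _ _ _).symm
    _ = q ^ ((D : ℝ) * (Fintype.card H.W) - 2 * (lam : ℝ) * ∑ e : H.E, H.ν e) *
          ∫⁻ x, F0 x := by rw [← ENNReal.rpow_add _ _ hq0 hqt, sub_eq_add_neg]

end Aux

/-- the normalized three-point Feynman integral
`‖z₁-z₀‖^(2λN_H) · A_H(z₀,z₁,z₂)` depends only on the two distance ratios
`‖z₂-z₀‖/‖z₁-z₀‖` and `‖z₂-z₁‖/‖z₁-z₀‖`. -/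
theorem statement13 (lam : ℕ) (hlam : 1 ≤ lam) (D : ℕ) (hD : D = 2 * lam + 2)
    (H : FeynGraph 3)
    (z0 z1 z2 w0 w1 w2 : EuclideanSpace ℝ (Fin D))
    (hz01 : z0 ≠ z1) (hz02 : z0 ≠ z2) (hz12 : z1 ≠ z2)
    (hw01 : w0 ≠ w1) (hw02 : w0 ≠ w2) (hw12 : w1 ≠ w2)
    (hr1 : ‖z2 - z0‖ / ‖z1 - z0‖ = ‖w2 - w0‖ / ‖w1 - w0‖)
    (hr2 : ‖z2 - z1‖ / ‖z1 - z0‖ = ‖w2 - w1‖ / ‖w1 - w0‖) :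
    (ENNReal.ofReal ‖z1 - z0‖) ^
        (2 * (lam : ℝ) *
          ((∑ e : H.E, H.ν e) - (D : ℝ) / (2 * (lam : ℝ)) * (Fintype.card H.W))) *
      H.A lam D ![z0, z1, z2] =
    (ENNReal.ofReal ‖w1 - w0‖) ^
        (2 * (lam : ℝ) *
          ((∑ e : H.E, H.ν e) - (D : ℝ) / (2 * (lam : ℝ)) * (Fintype.card H.W))) *
      H.A lam D ![w0, w1, w2] := by
  classical
  have hz10 : z1 - z0 ≠ 0 := sub_ne_zero.mpr (Ne.symm hz01)
  have hw10 : w1 - w0 ≠ 0 := sub_ne_zero.mpr (Ne.symm hw01)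
  have hz10' : (0 : ℝ) < ‖z1 - z0‖ := norm_pos_iff.mpr hz10
  have hw10' : (0 : ℝ) < ‖w1 - w0‖ := norm_pos_iff.mpr hw10
  set c : ℝ := ‖w1 - w0‖ / ‖z1 - z0‖ with hcdef
  have hc : 0 < c := div_pos hw10' hz10'
  have h1 : ‖c⁻¹ • (w1 - w0)‖ = ‖z1 - z0‖ := by
    rw [norm_smul, Real.norm_eq_abs, abs_of_pos (inv_pos.mpr hc), hcdef]
    field_simp
  have hr1' : ‖z2 - z0‖ * ‖w1 - w0‖ = ‖w2 - w0‖ * ‖z1 - z0‖ :=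
    (div_eq_div_iff hz10'.ne' hw10'.ne').mp hr1
  have h2 : ‖c⁻¹ • (w2 - w0)‖ = ‖z2 - z0‖ := by
    rw [norm_smul, Real.norm_eq_abs, abs_of_pos (inv_pos.mpr hc), hcdef]
    field_simp
    linear_combination -hr1'
  have hr2' : ‖z2 - z1‖ * ‖w1 - w0‖ = ‖w2 - w1‖ * ‖z1 - z0‖ :=
    (div_eq_div_iff hz10'.ne' hw10'.ne').mp hr2
  have h3 : ‖c⁻¹ • (w2 - w0) - c⁻¹ • (w1 - w0)‖ = ‖(z2 - z0) - (z1 - z0)‖ := by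
    rw [← smul_sub, sub_sub_sub_cancel_right, sub_sub_sub_cancel_right,
      norm_smul, Real.norm_eq_abs, abs_of_pos (inv_pos.mpr hc), hcdef]
    field_simp
    linear_combination -hr2'
  obtain ⟨A, hA1, hA2⟩ := exists_isometry_two (z1 - z0) (z2 - z0)
    (c⁻¹ • (w1 - w0)) (c⁻¹ • (w2 - w0)) h1 h2 h3
  have hAz := A_similarity lam D H A hc z0 w0 ![z0, z1, z2]
  have hvec : (fun i => w0 + c • A (![z0, z1, z2] i - z0)) = ![w0, w1, w2] := by
    funext i
    fin_cases i
    · show w0 + c • A (z0 - z0) = w0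
      simp
    · show w0 + c • A (z1 - z0) = w1
      rw [hA1, smul_inv_smul₀ hc.ne']
      abel
    · show w0 + c • A (z2 - z0) = w2
      rw [hA2, smul_inv_smul₀ hc.ne']
      abel
  rw [hvec] at hAz
  set q : ℝ≥0∞ := ENNReal.ofReal c with hq
  have hq0 : q ≠ 0 := (ENNReal.ofReal_pos.mpr hc).ne'
  have hqt : q ≠ ⊤ := ENNReal.ofReal_ne_top
  set T : ℝ := 2 * (lam : ℝ) *
    ((∑ e : H.E, H.ν e) - (D : ℝ) / (2 * (lam : ℝ)) * (Fintype.card H.W)) with hT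
  have hlam' : ((lam : ℝ)) ≠ 0 := Nat.cast_ne_zero.mpr (by omega)
  have hTeq : (D : ℝ) * (Fintype.card H.W) - 2 * (lam : ℝ) * ∑ e : H.E, H.ν e = -T := by
    rw [hT]
    field_simp
    ring
  rw [hTeq] at hAz
  have hw1w0 : ‖w1 - w0‖ = c * ‖z1 - z0‖ := by rw [hcdef]; field_simp
  rw [hAz, hw1w0, ENNReal.ofReal_mul hc.le,
    ENNReal.mul_rpow_of_ne_top ENNReal.ofReal_ne_top ENNReal.ofReal_ne_top]
  have hqq : q ^ T * q ^ (-T) = 1 := by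
    rw [← ENNReal.rpow_add _ _ hq0 hqt]
    simp
  calc ENNReal.ofReal ‖z1 - z0‖ ^ T * H.A lam D ![z0, z1, z2]
      = (q ^ T * q ^ (-T)) * (ENNReal.ofReal ‖z1 - z0‖ ^ T * H.A lam D ![z0, z1, z2]) := by
        rw [hqq, one_mul]
    _ = q ^ T * ENNReal.ofReal ‖z1 - z0‖ ^ T * (q ^ (-T) * H.A lam D ![z0, z1, z2]) := by
        ring
end
end
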